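/- arXiv:1904.10029 — 2 statements merged into one kernel-verified Lean document; each statement's English description precedes it below -/
import Mathlib

section
/- A pattern p is avoidable in the ordinary sense if and only if p is avoidable up to ≃. -/
/-- `x` is a (finite, contiguous) factor of the infinite word `w`. -/
def InfFactor {A : Type*} (x : List A) (w : ℕ → A) : Prop :=
  ∃ i : ℕ, x = (List.range x.length).map fun j => w (i + j)

/-- Reversal-equivalence of words: `x ≃ x'` iff `x' = x` or `x'` is the reversal of `x`. -/
def SimRev {A : Type*} (x x' : List A) : Prop := x' = x ∨ x' = x.reverse

/-- The infinite word `w` encounters the pattern `p` up to the relation `sim`: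
`w` has a factor `X₁X₂⋯Xₙ` with each `Xᵢ` nonempty and `sim Xᵢ Xⱼ` whenever `pᵢ = pⱼ`. -/
def Encounters {V A : Type*} (sim : List A → List A → Prop) (p : List V) (w : ℕ → A) : Prop :=
  ∃ X : List (List A), X.length = p.length ∧ (∀ x ∈ X, x ≠ []) ∧
    InfFactor X.flatten w ∧
    ∀ i j : ℕ, i < p.length → j < p.length → p[i]? = p[j]? →
      sim (X.getD i []) (X.getD j [])

lemma infFactor_iff {A : Type*} (x : List A) (w : ℕ → A) :
    InfFactor x w ↔ ∃ i, ∀ j (h : j < x.length), x[j] = w (i + j) := by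
  constructor
  · rintro ⟨i, hi⟩
    refine ⟨i, fun j hj => ?_⟩
    rw [List.getElem_of_eq hi]
    simp
  · rintro ⟨i, hi⟩
    refine ⟨i, ?_⟩
    apply List.ext_getElem (by simp)
    intro j h1 h2
    simp [hi j h1]

lemma infFactor_of_infix {A : Type*} {x y : List A} {w : ℕ → A}
    (hxy : x <:+: y) (hy : InfFactor y w) : InfFactor x w := by
  obtain ⟨s, t, rfl⟩ := hxy
  rw [infFactor_iff] at hy ⊢
  obtain ⟨i, hi⟩ := hy
  refine ⟨i + s.length, fun j hj => ?_⟩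
  have hlen : s.length + j < (s ++ x ++ t).length := by simp; omega
  have h1 : (s ++ x ++ t)[s.length + j]'hlen = x[j]'hj := by
    rw [List.getElem_append_left (by simp; omega)]
    rw [List.getElem_append_right (by omega)]
    simp
  rw [← h1, hi _ hlen, Nat.add_assoc]

lemma infFactor_map {A B : Type*} {x : List A} {w : ℕ → A} (f : A → B)
    (hx : InfFactor x w) : InfFactor (x.map f) (fun n => f (w n)) := by
  obtain ⟨i, hi⟩ := hx
  refine ⟨i, ?_⟩
  conv_lhs => rw [hi]
  simp [Function.comp_def]

/-- Decoding the marked letter. -/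
def unmark {k : ℕ} (a : Fin (3 * k)) : Fin k := ⟨a.val / 3, by have := a.2; omega⟩

/-- The marked word over `Fin (3*k)`. -/
def markWord {k : ℕ} (w : ℕ → Fin k) (n : ℕ) : Fin (3 * k) :=
  ⟨3 * (w n).val + n % 3, by have := (w n).2; omega⟩

lemma markWord_val_mod {k : ℕ} (w : ℕ → Fin k) (n : ℕ) :
    (markWord w n).val % 3 = n % 3 := by
  simp [markWord]

/-- Key: no factor of the marked word of length ≥ 2 has its reversal also a factor. -/
lemma not_rev_factor {k : ℕ} (w : ℕ → Fin k) (x : List (Fin (3 * k)))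
    (hlen : 2 ≤ x.length) (h1 : InfFactor x (markWord w))
    (h2 : InfFactor x.reverse (markWord w)) : False := by
  rw [infFactor_iff] at h1 h2
  obtain ⟨a, ha⟩ := h1
  obtain ⟨b, hb⟩ := h2
  have hb0 := hb 0 (by simp; omega)
  have hb1 := hb 1 (by simp; omega)
  rw [List.getElem_reverse] at hb0 hb1
  have ha0 := ha (x.length - 1 - 0) (by omega)
  have ha1 := ha (x.length - 1 - 1) (by omega)
  rw [ha0] at hb0
  rw [ha1] at hb1
  have e0 := congrArg (fun v : Fin (3 * k) => v.val % 3) hb0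
  have e1 := congrArg (fun v : Fin (3 * k) => v.val % 3) hb1
  simp only [markWord_val_mod] at e0 e1
  omega

lemma encounters_mark {V : Type*} (p : List V) {k : ℕ} (w : ℕ → Fin k)
    (h : Encounters SimRev p (markWord w)) : Encounters Eq p w := by
  obtain ⟨X, hXlen, hXne, hXfac, hXsim⟩ := h
  set f : Fin (3 * k) → Fin k := unmark with hf
  have hfw : ∀ n, f (markWord w n) = w n := by
    intro n
    apply Fin.ext
    simp only [hf, unmark, markWord]
    omega
  -- each piece is a factor of the marked word
  have hpiece : ∀ i (hi : i < X.length), InfFactor X[i] (markWord w) := by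
    intro i hi
    exact infFactor_of_infix (List.infix_of_mem_flatten (X.getElem_mem hi)) hXfac
  have heq : ∀ i j (hi : i < X.length) (hj : j < X.length),
      SimRev X[i] X[j] → X[i] = X[j] := by
    intro i j hi hj hsim
    rcases hsim with h | h
    · exact h.symm
    · rcases Nat.lt_or_ge X[i].length 2 with hl | hl
      · -- length ≤ 1 : reverse equals itself
        have hne : X[i] ≠ [] := hXne _ (X.getElem_mem hi)
        match hx : X[i], hl with
        | [c], _ => rw [hx] at h; simp at h; rw [h]
        | [], _ => exact absurd hx hne
      · exfalso
        have h2 : InfFactor X[i].reverse (markWord w) := h ▸ hpiece j hj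
        exact not_rev_factor w X[i] hl (hpiece i hi) h2
  refine ⟨X.map (List.map f), by simpa using hXlen, ?_, ?_, ?_⟩
  · intro x hx
    simp only [List.mem_map] at hx
    obtain ⟨y, hy, rfl⟩ := hx
    simpa using hXne y hy
  · have : (X.map (List.map f)).flatten = X.flatten.map f := by
      simp [List.map_flatten]
    rw [this]
    have h2 := infFactor_map f hXfac
    have hw : (fun n => f (markWord w n)) = w := funext hfw
    rw [← hw]
    exact h2
  · intro i j hi hj hpij
    have hiX : i < X.length := hXlen ▸ hi
    have hjX : j < X.length := hXlen ▸ hj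
    have hsim := hXsim i j hi hj hpij
    rw [List.getD_eq_getElem _ _ hiX, List.getD_eq_getElem _ _ hjX] at hsim
    have := heq i j hiX hjX hsim
    rw [List.getD_eq_getElem _ _ (by simpa using hiX),
        List.getD_eq_getElem _ _ (by simpa using hjX)]
    simp only [List.getElem_map]
    rw [this]

/-- A pattern `p` is avoidable in the ordinary sense if and only if it is avoidable
up to `≃` (reversal-equivalence). -/
theorem avoidable_iff_avoidable_upto_rev {V : Type*} (p : List V) (hp : p ≠ []) :
    (∃ k : ℕ, 0 < k ∧ ∃ w : ℕ → Fin k, ¬ Encounters Eq p w) ↔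
    (∃ k : ℕ, 0 < k ∧ ∃ w : ℕ → Fin k, ¬ Encounters SimRev p w) := by
  constructor
  · rintro ⟨k, hk, w, hw⟩
    refine ⟨3 * k, by omega, markWord w, fun h => hw (encounters_mark p w h)⟩
  · rintro ⟨k, hk, w, hw⟩
    refine ⟨k, hk, w, fun h => hw ?_⟩
    obtain ⟨X, h1, h2, h3, h4⟩ := h
    exact ⟨X, h1, h2, h3, fun i j hi hj hij => Or.inl (h4 i j hi hj hij).symm⟩
end

section
/- For the unary patterns x^m: λ_≃(x²) = 3, λ_≃(x³) = 3, and λ_≃(x^m) = 2 for every m ≥ 4. That is: there is an infinite ternary word avoiding xx up to ≃ but no infinite binary word does; there is an infinite ternary word avoiding xxx up to ≃ but no infinite binary word does; and for every m ≥ 4 there is an infinite binary word avoiding x^m up to ≃ (while no infinite unary word avoids any x^m). -/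
/-- The avoidability index of the unary pattern `x^m` up to `≃`: the least `k` such
that some infinite word over a `k`-letter alphabet avoids `x^m` up to `≃`. -/
noncomputable def lamRevUnary (m : ℕ) : ℕ :=
  sInf {k : ℕ | ∃ w : ℕ → Fin k, ¬ Encounters SimRev (List.replicate m ()) w}


/-- Thue–Morse sequence. -/
def tm : ℕ → Bool
  | 0 => false
  | (n+1) => (((n+1) % 2 == 1)).xor (tm ((n+1)/2))
decreasing_by exact Nat.div_lt_self (Nat.succ_pos n) one_lt_two

lemma tm_odd (q : ℕ) : tm (2*q+1) = !(tm q) := by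
  rw [show 2*q+1 = (2*q)+1 by ring, tm]
  have h1 : (2*q+1) % 2 = 1 := by omega
  have h2 : (2*q+1) / 2 = q := by omega
  rw [h1, h2]
  cases tm q <;> rfl

lemma tm_even (q : ℕ) : tm (2*q) = tm q := by
  cases q with
  | zero => rfl
  | succ k =>
    rw [show 2*(k+1) = (2*k+1)+1 by ring, tm]
    have h1 : ((2*k+1)+1) % 2 = 0 := by omega
    have h2 : ((2*k+1)+1) / 2 = k+1 := by omega
    rw [h1, h2]
    cases tm (k+1) <;> rfl

lemma nocube (i : ℕ) : ¬ (tm i = tm (i+1) ∧ tm (i+1) = tm (i+2)) := by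
  rintro ⟨h1, h2⟩
  obtain ⟨q, hq⟩ : ∃ q, i = 2*q ∨ i = 2*q + 1 := ⟨i/2, by omega⟩
  rcases hq with hq | hq
  · rw [hq, tm_even, tm_odd] at h1
    cases tm q <;> simp_all
  · rw [hq, show 2*q+1+1 = 2*(q+1) by ring, show 2*q+1+2 = 2*(q+1)+1 by ring,
      tm_even, tm_odd] at h2
    cases tm (q+1) <;> simp_all

/-- Thue–Morse is overlap-free. -/
theorem tm_no_overlap : ∀ n, 1 ≤ n → ∀ i, ¬ (∀ j ≤ n, tm (i+j) = tm (i+j+n)) := by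
  intro n
  induction n using Nat.strong_induction_on with
  | _ n IH =>
    intro hn i H
    rcases Nat.lt_or_ge n 2 with h2 | h2
    · -- n = 1
      interval_cases n
      have h0 := H 0 (by omega); have h1 := H 1 (by omega)
      simp only [Nat.add_zero] at h0
      exact nocube i ⟨h0, by rw [show i+1+1 = i+2 by ring] at h1; exact h1⟩
    rcases Nat.even_or_odd n with ⟨m, hm⟩ | ⟨e, he⟩
    · -- even case
      have hm1 : 1 ≤ m := by omega
      obtain ⟨q, hq⟩ : ∃ q, i = 2*q ∨ i = 2*q + 1 := ⟨i/2, by omega⟩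
      rcases hq with hq | hq
      · refine IH m (by omega) hm1 q (fun s hs => ?_)
        have := H (2*s) (by omega)
        rw [hq, show 2*q+2*s = 2*(q+s) by ring, show 2*(q+s)+n = 2*(q+s+m) by omega,
          tm_even, tm_even] at this
        exact this
      · refine IH m (by omega) hm1 q (fun s hs => ?_)
        have := H (2*s) (by omega)
        rw [hq, show 2*q+1+2*s = 2*(q+s)+1 by ring, show 2*(q+s)+1+n = 2*(q+s+m)+1 by omega,
          tm_odd, tm_odd] at this
        exact Bool.not_inj this
    · -- odd case
      obtain ⟨q, d, hd1, hd2⟩ : ∃ q d, d ≤ 1 ∧ i + d = 2*q := ⟨(i+1)/2, (i+1)/2*2 - i, by omega, by omega⟩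
      rcases Nat.lt_or_ge n 5 with h5 | h5
      · -- n = 3
        have hn3 : n = 3 := by omega
        have A := H d (by omega)
        have B := H (d+1) (by omega)
        have C := H (d+2) (by omega)
        rw [show i+d = 2*q from hd2, hn3, show 2*q+3 = 2*(q+1)+1 by ring, tm_even, tm_odd] at A
        rw [show i+(d+1) = 2*q+1 by omega, hn3, show 2*q+1+3 = 2*(q+2) by ring, tm_odd, tm_even] at B
        rw [show i+(d+2) = 2*(q+1) by omega, hn3, show 2*(q+1)+3 = 2*(q+2)+1 by ring, tm_even, tm_odd] at C
        clear H IH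
        cases h1 : tm q <;> cases h2 : tm (q+1) <;> cases h3 : tm (q+2) <;> simp_all
      · -- n odd ≥ 5
        have he' : n = 2*e+1 := by omega
        have E0 := H d (by omega)
        have E1 := H (d+1) (by omega)
        have E2 := H (d+2) (by omega)
        have E3 := H (d+3) (by omega)
        rw [show i+d = 2*q from hd2, show 2*q+n = 2*(q+e)+1 by omega, tm_even, tm_odd] at E0
        rw [show i+(d+1) = 2*q+1 by omega, show 2*q+1+n = 2*(q+e+1) by omega, tm_odd, tm_even] at E1
        rw [show i+(d+2) = 2*(q+1) by omega, show 2*(q+1)+n = 2*(q+e+1)+1 by omega, tm_even, tm_odd] at E2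
        rw [show i+(d+3) = 2*(q+1)+1 by omega, show 2*(q+1)+1+n = 2*(q+e+2) by omega, tm_odd, tm_even] at E3
        clear H IH
        refine nocube (q+e) ⟨?_, ?_⟩
        · rw [show q+e+1 = q+e+1 from rfl]
          cases h1 : tm q <;> cases h2 : tm (q+1) <;> cases h3 : tm (q+e) <;>
            cases h4 : tm (q+e+1) <;> simp_all
        · rw [show q+e+1+1 = q+e+2 by ring]
          cases h1 : tm q <;> cases h2 : tm (q+1) <;> cases h3 : tm (q+e+1) <;>
            cases h4 : tm (q+e+2) <;> simp_all
/-- The ternary square-free word: difference word of Thue–Morse. -/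
def w3 : ℕ → Fin 3 := fun n =>
  if tm n = tm (n+1) then 0 else if tm n then 1 else 2

/-- integer value of tm -/
def T (n : ℕ) : ℤ := if tm n then 1 else 0

lemma w3_eq_iff (a b : ℕ) : w3 a = w3 b ↔ T (a+1) - T a = T (b+1) - T b := by
  unfold w3 T
  cases h1 : tm a <;> cases h2 : tm (a+1) <;> cases h3 : tm b <;> cases h4 : tm (b+1) <;>
    simp <;> omega

/-- w3 is square-free. -/
theorem w3_sqfree : ∀ n, 1 ≤ n → ∀ i, ¬ (∀ l, l < n → w3 (i+l) = w3 (i+n+l)) := by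
  intro n hn i hsq
  have he : ∀ j ≤ n, T (i+n+j) - T (i+j) = T (i+n) - T i := by
    intro j hj
    induction j with
    | zero => simp
    | succ k IHk =>
      have hk := IHk (by omega)
      have := (w3_eq_iff (i+k) (i+n+k)).mp (hsq k (by omega))
      rw [show i+k+1 = i+(k+1) by ring, show i+n+k+1 = i+n+(k+1) by ring] at this
      omega
  have hT : ∀ m, T m = 0 ∨ T m = 1 := by
    intro m; unfold T; cases tm m <;> simp
  rcases eq_or_ne (T (i+n) - T i) 0 with hc | hc
  · refine tm_no_overlap n hn i (fun j hj => ?_)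
    have := he j hj
    rw [hc] at this
    have hj1 := hT (i+j); have hj2 := hT (i+n+j)
    have hTeq : T (i+j) = T (i+j+n) := by rw [show i+j+n = i+n+j by ring]; omega
    unfold T at hTeq
    cases h1 : tm (i+j) <;> cases h2 : tm (i+j+n) <;> simp_all
  · have h0 := he 0 (by omega)
    have hnn := he n (by omega)
    have := hT i; have := hT (i+n); have := hT (i+n+n)
    omega
/-- digit weight in base 5 -/
def dd (r : ℕ) : Bool := decide (r = 1 ∨ r = 2 ∨ r = 3)

/-- The binary word: parity of the number of base-5 digits in {1,2,3}. -/
def Wb : ℕ → Bool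
  | 0 => false
  | (n+1) => (dd ((n+1) % 5)).xor (Wb ((n+1)/5))
decreasing_by exact Nat.div_lt_self (Nat.succ_pos n) (by omega)

lemma Wb_eq5 (t r : ℕ) (hr : r < 5) : Wb (5*t + r) = (dd r).xor (Wb t) := by
  rcases Nat.eq_zero_or_pos (5*t+r) with h0 | hp
  · have ht : t = 0 := by omega
    have hr0 : r = 0 := by omega
    rw [h0, ht, hr0]
    simp [Wb, dd]
  · obtain ⟨k, hk⟩ : ∃ k, 5*t+r = k+1 := ⟨5*t+r-1, by omega⟩
    rw [hk, Wb]
    have h1 : (k+1) % 5 = r := by omega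
    have h2 : (k+1) / 5 = t := by omega
    rw [h1, h2]

lemma Wb_five (t : ℕ) : Wb (5*t) = Wb t := by
  have := Wb_eq5 t 0 (by omega)
  simpa [dd] using this

/-- triples occur in Wb exactly at positions ≡ 1 (mod 5) -/
lemma triple_iff (s : ℕ) : (Wb s = Wb (s+1) ∧ Wb (s+1) = Wb (s+2)) ↔ s % 5 = 1 := by
  obtain ⟨t, r, hr, hs⟩ : ∃ t r, r < 5 ∧ s = 5*t + r := ⟨s/5, s%5, by omega, by omega⟩
  have hmod : s % 5 = r := by omega
  subst hs
  rw [hmod]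
  interval_cases r
  · rw [show 5*t+0 = 5*t+0 from rfl, Wb_eq5 t 0 (by omega), show 5*t+0+1 = 5*t+1 by ring,
      Wb_eq5 t 1 (by omega), show 5*t+0+2 = 5*t+2 by ring, Wb_eq5 t 2 (by omega)]
    simp [dd]
  · rw [Wb_eq5 t 1 (by omega), show 5*t+1+1 = 5*t+2 by ring, Wb_eq5 t 2 (by omega),
      show 5*t+1+2 = 5*t+3 by ring, Wb_eq5 t 3 (by omega)]
    simp [dd]
  · rw [Wb_eq5 t 2 (by omega), show 5*t+2+1 = 5*t+3 by ring, Wb_eq5 t 3 (by omega),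
      show 5*t+2+2 = 5*t+4 by ring, Wb_eq5 t 4 (by omega)]
    simp [dd]
  · rw [Wb_eq5 t 3 (by omega), show 5*t+3+1 = 5*t+4 by ring, Wb_eq5 t 4 (by omega),
      show 5*t+3+2 = 5*(t+1) by ring, Wb_five]
    simp [dd]
  · rw [Wb_eq5 t 4 (by omega), show 5*t+4+1 = 5*(t+1) by ring, Wb_five,
      show 5*t+4+2 = 5*(t+1)+1 by ring, Wb_eq5 (t+1) 1 (by omega)]
    simp [dd]
/-- Wb contains no fourth power. -/
theorem Wb_no4 : ∀ p, 1 ≤ p → ∀ i, ¬ (∀ l, l < 3*p → Wb (i+l) = Wb (i+l+p)) := by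
  intro p
  induction p using Nat.strong_induction_on with
  | _ p IH =>
    intro hp i H
    obtain ⟨j, hj4, hj⟩ : ∃ j, j ≤ 4 ∧ (i+j) % 5 = 1 := ⟨(6 - i % 5) % 5, by omega, by omega⟩
    rcases Nat.lt_or_ge p 3 with h3 | h3
    · interval_cases p
      · -- p = 1
        have h0 := H 0 (by omega)
        have h1 := H 1 (by omega)
        have h2 := H 2 (by omega)
        simp only [Nat.add_zero] at h0
        rw [show i+1+1 = i+2 by ring] at h1
        rw [show i+2+1 = i+3 by ring] at h2
        have t0 : i % 5 = 1 := (triple_iff i).mp ⟨h0, h1⟩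
        have t1 : (i+1) % 5 = 1 := (triple_iff (i+1)).mp
          (by rw [show i+1+1 = i+2 by ring, show i+1+2 = i+3 by ring]; exact ⟨h1, h2⟩)
        omega
      · -- p = 2
        have ht : Wb (i+j) = Wb (i+j+1) ∧ Wb (i+j+1) = Wb (i+j+2) := (triple_iff (i+j)).mpr hj
        have h13 := H (j+1) (by omega)
        rw [show i+(j+1) = i+j+1 by ring, show i+j+1+2 = i+j+3 by ring] at h13
        have : (i+j+1) % 5 = 1 := (triple_iff (i+j+1)).mp
          (by rw [show i+j+1+1 = i+j+2 by ring, show i+j+1+2 = i+j+3 by ring]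
              exact ⟨ht.2, by rw [← ht.2, ← h13]⟩)
        omega
    · -- p ≥ 3 : transfer triple, get 5 ∣ p
      have ht : Wb (i+j) = Wb (i+j+1) ∧ Wb (i+j+1) = Wb (i+j+2) := (triple_iff (i+j)).mpr hj
      have e0 := H j (by omega)
      have e1 := H (j+1) (by omega)
      have e2 := H (j+2) (by omega)
      rw [show i+(j+1) = i+j+1 by ring, show i+j+1+p = i+j+p+1 by ring] at e1
      rw [show i+(j+2) = i+j+2 by ring, show i+j+2+p = i+j+p+2 by ring] at e2
      rw [show i+j+p = i+j+p from rfl] at e0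
      have ht' : Wb (i+j+p) = Wb (i+j+p+1) ∧ Wb (i+j+p+1) = Wb (i+j+p+2) := by
        constructor
        · rw [← e0, ← e1]; exact ht.1
        · rw [← e1, ← e2]; exact ht.2
      have hp5 : (i+j+p) % 5 = 1 := (triple_iff (i+j+p)).mp ht'
      obtain ⟨q, hq⟩ : ∃ q, p = 5*q := ⟨p/5, by omega⟩
      have hq1 : 1 ≤ q := by omega
      refine IH q (by omega) hq1 ((i+4)/5) (fun l hl => ?_)
      set t0 := (i+4)/5 with ht0
      have key := H (5*(t0+l) - i) (by omega)
      rw [show i + (5*(t0+l) - i) = 5*(t0+l) by omega,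
        show 5*(t0+l) + p = 5*(t0+l+q) by omega, Wb_five, Wb_five] at key
      exact key
/-- window of Wb -/
def winb (i L : ℕ) : List Bool := (List.range L).map (fun j => Wb (i+j))

@[simp] lemma winb_length (i L : ℕ) : (winb i L).length = L := by simp [winb]

lemma winb_getElem (i L m : ℕ) (h : m < L) :
    (winb i L)[m]'(by simpa using h) = Wb (i+m) := by
  simp [winb]

lemma winb_getD (i L m : ℕ) (h : m < L) : (winb i L).getD m false = Wb (i+m) := by
  rw [List.getD_eq_getElem _ _ (by simpa using h), winb_getElem i L m h]

/-- base-5 expansion map -/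
def expB (v : List Bool) : List Bool := v.flatMap (fun c => [c, !c, !c, !c, c])

@[simp] lemma expB_length (v : List Bool) : (expB v).length = 5 * v.length := by
  induction v with
  | nil => simp [expB]
  | cons c w IH => simp [expB] at IH ⊢; omega

lemma expB_append (u v : List Bool) : expB (u ++ v) = expB u ++ expB v := by
  simp [expB]

lemma winb_append (i a b : ℕ) : winb i a ++ winb (i+a) b = winb i (a+b) := by
  apply List.ext_getElem
  · simp
  · intro m h1 h2
    rcases Nat.lt_or_ge m a with hm | hm
    · rw [List.getElem_append_left (by simpa using hm)]
      rw [winb_getElem i a m hm, winb_getElem i (a+b) m (by simpa using h2)]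
    · rw [List.getElem_append_right (by simpa using hm)]
      simp only [winb_length]
      rw [winb_getElem (i+a) b (m-a) (by simp at h2; omega),
        winb_getElem i (a+b) m (by simpa using h2)]
      congr 1
      omega

lemma winb_five_block (t : ℕ) : winb (5*t) 5 = [Wb t, !(Wb t), !(Wb t), !(Wb t), Wb t] := by
  have e0 := Wb_five t
  have e1 := Wb_eq5 t 1 (by omega)
  have e2 := Wb_eq5 t 2 (by omega)
  have e3 := Wb_eq5 t 3 (by omega)
  have e4 := Wb_eq5 t 4 (by omega)
  simp [dd] at e1 e2 e3 e4
  simp [winb, List.range_succ]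
  refine ⟨e0, e1, e2, e3, e4⟩

lemma expB_winb (t l : ℕ) : expB (winb t l) = winb (5*t) (5*l) := by
  induction l with
  | zero => simp [expB, winb]
  | succ m IH =>
    have : winb t (m+1) = winb t m ++ winb (t+m) 1 := (winb_append t m 1).symm
    rw [this, expB_append, IH]
    have h1 : winb (t+m) 1 = [Wb (t+m)] := by simp [winb, List.range_succ]
    rw [h1]
    have h2 : expB [Wb (t+m)] = winb (5*(t+m)) 5 := by
      rw [winb_five_block]; simp [expB]
    rw [h2, show 5*(t+m) = 5*t + 5*m by ring, winb_append]
    congr 1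

lemma winb_drop_take (a M d L : ℕ) (h : d + L ≤ M) :
    ((winb a M).drop d).take L = winb (a+d) L := by
  apply List.ext_getElem
  · simp; omega
  · intro m h1 h2
    simp only [List.getElem_take, List.getElem_drop]
    simp only [winb_length] at h2
    rw [winb_getElem a M (d+m) (by omega), winb_getElem (a+d) L m h2]
    congr 1
    omega

def C2L : List (List Bool) := [[false,false],[false,true],[true,false],[true,true]]
def C6L : List (List Bool) := C2L.flatMap (fun v => (List.range 5).map (fun o => ((expB v).drop o).take 6))
def C24L : List (List Bool) := C6L.flatMap (fun v => (List.range 5).map (fun o => ((expB v).drop o).take 24))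

lemma winb2_mem (t : ℕ) : winb t 2 ∈ C2L := by
  have : winb t 2 = [Wb t, Wb (t+1)] := by simp [winb, List.range_succ]
  rw [this]
  cases Wb t <;> cases Wb (t+1) <;> simp [C2L]

lemma winb6_mem (i : ℕ) : winb i 6 ∈ C6L := by
  obtain ⟨t, r, hr, hi⟩ : ∃ t r, r < 5 ∧ i = 5*t + r := ⟨i/5, i%5, by omega, by omega⟩
  have : winb i 6 = ((expB (winb t 2)).drop r).take 6 := by
    rw [expB_winb, winb_drop_take (5*t) 10 r 6 (by omega), hi]
  rw [this]
  simp only [C6L, List.mem_flatMap, List.mem_map]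
  exact ⟨winb t 2, winb2_mem t, r, by simp [List.mem_range]; omega, rfl⟩

lemma winb24_mem (i : ℕ) : winb i 24 ∈ C24L := by
  obtain ⟨t, r, hr, hi⟩ : ∃ t r, r < 5 ∧ i = 5*t + r := ⟨i/5, i%5, by omega, by omega⟩
  have : winb i 24 = ((expB (winb t 6)).drop r).take 24 := by
    rw [expB_winb, winb_drop_take (5*t) 30 r 24 (by omega), hi]
  rw [this]
  simp only [C24L, List.mem_flatMap, List.mem_map]
  exact ⟨winb t 6, winb6_mem t, r, by simp [List.mem_range]; omega, rfl⟩

/-- occurrence predicate on a list -/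
def OccL (u : List Bool) (n : ℕ) : Prop := ∀ k, k < 4 → 1 ≤ k →
  ((∀ l, l < n → u.getD (k*n+l) false = u.getD l false) ∨
   (∀ l, l < n → u.getD (k*n+l) false = u.getD (n-1-l) false))

instance (u n) : Decidable (OccL u n) := by
  unfold OccL
  infer_instance

lemma smallcheck : ∀ u ∈ C24L, ∀ n, n < 7 → 2 ≤ n → ¬ OccL u n := by decide
/-- block condition: block k (at offset k*n) equals the base block or its reversal -/
def WBlk (i n k : ℕ) : Prop :=
  (∀ l, l < n → Wb (i+k*n+l) = Wb (i+l)) ∨ (∀ l, l < n → Wb (i+k*n+l) = Wb (i+(n-1-l)))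

lemma allEq_case (i n : ℕ) (hn : 1 ≤ n)
    (h1 : ∀ l, l < n → Wb (i+1*n+l) = Wb (i+l))
    (h2 : ∀ l, l < n → Wb (i+2*n+l) = Wb (i+l))
    (h3 : ∀ l, l < n → Wb (i+3*n+l) = Wb (i+l)) : False := by
  refine Wb_no4 n hn i (fun l hl => ?_)
  rcases Nat.lt_or_ge l n with c1 | c1
  · rw [show i+l+n = i+1*n+l by ring]
    exact (h1 l c1).symm
  rcases Nat.lt_or_ge l (2*n) with c2 | c2
  · have e1 := h1 (l-n) (by omega)
    have e2 := h2 (l-n) (by omega)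
    rw [show i+1*n+(l-n) = i+l by omega] at e1
    rw [show i+2*n+(l-n) = i+l+n by omega] at e2
    rw [e1, e2]
  · have e2 := h2 (l-2*n) (by omega)
    have e3 := h3 (l-2*n) (by omega)
    rw [show i+2*n+(l-2*n) = i+l by omega] at e2
    rw [show i+3*n+(l-2*n) = i+l+n by omega] at e3
    rw [e2, e3]

lemma blkE_mod (i n k j : ℕ) (hn : 7 ≤ n) (hj : j ≤ 4) (hmod : (i+j) % 5 = 1)
    (hk : ∀ l, l < n → Wb (i+k*n+l) = Wb (i+l)) : (i+k*n+j) % 5 = 1 := by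
  have ht : Wb (i+j) = Wb (i+j+1) ∧ Wb (i+j+1) = Wb (i+j+2) := (triple_iff (i+j)).mpr hmod
  have e0 := hk j (by omega)
  have e1 := hk (j+1) (by omega)
  have e2 := hk (j+2) (by omega)
  refine (triple_iff (i+k*n+j)).mp ⟨?_, ?_⟩
  · rw [show i+k*n+j+1 = i+k*n+(j+1) by ring, e0, e1, show i+(j+1) = i+j+1 by ring]
    exact ht.1
  · rw [show i+k*n+j+1 = i+k*n+(j+1) by ring, show i+k*n+j+2 = i+k*n+(j+2) by ring, e1, e2,
      show i+(j+1) = i+j+1 by ring, show i+(j+2) = i+j+2 by ring]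
    exact ht.2

lemma blkR_mod (i n k j : ℕ) (hn : 7 ≤ n) (hj : j ≤ 4) (hmod : (i+j) % 5 = 1)
    (hk : ∀ l, l < n → Wb (i+k*n+l) = Wb (i+(n-1-l))) : (i+k*n+(n-3-j)) % 5 = 1 := by
  have ht : Wb (i+j) = Wb (i+j+1) ∧ Wb (i+j+1) = Wb (i+j+2) := (triple_iff (i+j)).mpr hmod
  have e0 := hk (n-3-j) (by omega)
  have e1 := hk (n-2-j) (by omega)
  have e2 := hk (n-1-j) (by omega)
  rw [show n-1-(n-3-j) = j+2 by omega, show i+(j+2) = i+j+2 by ring] at e0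
  rw [show n-1-(n-2-j) = j+1 by omega, show i+(j+1) = i+j+1 by ring] at e1
  rw [show n-1-(n-1-j) = j by omega] at e2
  refine (triple_iff (i+k*n+(n-3-j))).mp ⟨?_, ?_⟩
  · rw [show i+k*n+(n-3-j)+1 = i+k*n+(n-2-j) by omega, e0, e1]
    exact ht.2.symm
  · rw [show i+k*n+(n-3-j)+1 = i+k*n+(n-2-j) by omega,
      show i+k*n+(n-3-j)+2 = i+k*n+(n-1-j) by omega, e1, e2]
    exact ht.1.symm

lemma blk_descend (i n k : ℕ) (hi : i % 5 = 0) (hn : n % 5 = 0) (h : WBlk i n k) :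
    WBlk (i/5) (n/5) k := by
  obtain ⟨i', hi'⟩ : ∃ i', i = 5*i' := ⟨i/5, by omega⟩
  obtain ⟨n', hn'⟩ : ∃ n', n = 5*n' := ⟨n/5, by omega⟩
  have hdi : i/5 = i' := by omega
  have hdn : n/5 = n' := by omega
  rw [hdi, hdn]
  rcases h with he | hr
  · left
    intro l hl
    have := he (5*l) (by omega)
    rw [hi', hn', show 5*i'+k*(5*n')+5*l = 5*(i'+k*n'+l) by ring,
      show 5*i'+5*l = 5*(i'+l) by ring, Wb_five, Wb_five] at this
    exact this
  · right
    intro l hl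
    have := hr (5*l+4) (by omega)
    rw [hi', hn', show 5*i'+k*(5*n')+(5*l+4) = 5*(i'+k*n'+l)+4 by ring,
      show 5*n'-1-(5*l+4) = 5*(n'-1-l) by omega,
      show 5*i'+5*(n'-1-l) = 5*(i'+(n'-1-l)) by ring,
      Wb_eq5 (i'+k*n'+l) 4 (by omega), Wb_five] at this
    simp [dd] at this
    exact this

/-- Wb avoids the pattern xxxx up to reversal. -/
theorem Wb_avoids : ∀ n, 1 ≤ n → ∀ i, ¬ (WBlk i n 1 ∧ WBlk i n 2 ∧ WBlk i n 3) := by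
  intro n
  induction n using Nat.strong_induction_on with
  | _ n IH =>
    rintro hn i ⟨B1, B2, B3⟩
    -- n = 1 case: all conditions collapse to equality
    rcases Nat.lt_or_ge n 2 with hn1 | hn2
    · interval_cases n
      have conv : ∀ k, WBlk i 1 k → Wb (i+k*1+0) = Wb (i+0) := by
        intro k h
        rcases h with h | h
        · exact h 0 (by omega)
        · have := h 0 (by omega); simpa using this
      exact allEq_case i 1 (by omega)
        (fun l hl => by interval_cases l; exact conv 1 B1)
        (fun l hl => by interval_cases l; exact conv 2 B2)
        (fun l hl => by interval_cases l; exact conv 3 B3)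
    rcases Nat.lt_or_ge n 7 with hn6 | hn7
    · -- 2 ≤ n ≤ 6 : finite check on 24-windows
      refine smallcheck (winb i 24) (winb24_mem i) n (by omega) hn2 ?_
      intro k hk4 hk1
      have hkn : k*n + n ≤ 24 := by
        have h1 : k ≤ 3 := by omega
        have h2 := Nat.mul_le_mul h1 (show n ≤ 6 by omega)
        omega
      have hblk : WBlk i n k := by
        interval_cases k
        · exact B1
        · exact B2
        · exact B3
      rcases hblk with h | h
      · left
        intro l hl
        rw [winb_getD i 24 (k*n+l) (by omega), winb_getD i 24 l (by omega),
          show i+(k*n+l) = i+k*n+l by ring]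
        exact h l hl
      · right
        intro l hl
        rw [winb_getD i 24 (k*n+l) (by omega), winb_getD i 24 (n-1-l) (by omega),
          show i+(k*n+l) = i+k*n+l by ring]
        exact h l hl
    · -- n ≥ 7
      obtain ⟨j, hj4, hj⟩ : ∃ j, j ≤ 4 ∧ (i+j) % 5 = 1 := ⟨(6 - i % 5) % 5, by omega, by omega⟩
      have hmod : i % 5 = 0 ∧ n % 5 = 0 := by
        have hjn : j + 3 ≤ n := by omega
        rcases B1 with e1 | r1 <;> rcases B2 with e2 | r2 <;> rcases B3 with e3 | r3
        · exact absurd (allEq_case i n (by omega) e1 e2 e3) (by simp)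
        all_goals {
          first
          | (have c1 := blkE_mod i n 1 j hn7 hj4 hj e1)
          | (have c1 := blkR_mod i n 1 j hn7 hj4 hj r1)
          first
          | (have c2 := blkE_mod i n 2 j hn7 hj4 hj e2)
          | (have c2 := blkR_mod i n 2 j hn7 hj4 hj r2)
          first
          | (have c3 := blkE_mod i n 3 j hn7 hj4 hj e3)
          | (have c3 := blkR_mod i n 3 j hn7 hj4 hj r3)
          omega
        }
      exact IH (n/5) (by omega) (by omega) (i/5)
        ⟨blk_descend i n 1 hmod.1 hmod.2 B1,
         blk_descend i n 2 hmod.1 hmod.2 B2,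
         blk_descend i n 3 hmod.1 hmod.2 B3⟩
section Bridge

variable {A : Type*}

/-- window of an infinite word -/
def winW (w : ℕ → A) (i L : ℕ) : List A := (List.range L).map (fun j => w (i+j))

@[simp] lemma winW_length (w : ℕ → A) (i L : ℕ) : (winW w i L).length = L := by simp [winW]

lemma winW_getElem (w : ℕ → A) (i L m : ℕ) (h : m < L) :
    (winW w i L)[m]'(by simpa using h) = w (i+m) := by simp [winW]

lemma winW_getD (w : ℕ → A) (i L m : ℕ) (d : A) (h : m < L) :
    (winW w i L).getD m d = w (i+m) := by
  rw [List.getD_eq_getElem _ _ (by simpa using h), winW_getElem w i L m h]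

lemma winW_append (w : ℕ → A) (i a b : ℕ) :
    winW w i a ++ winW w (i+a) b = winW w i (a+b) := by
  apply List.ext_getElem
  · simp
  · intro m h1 h2
    rcases Nat.lt_or_ge m a with hm | hm
    · rw [List.getElem_append_left (by simpa using hm)]
      rw [winW_getElem w i a m hm, winW_getElem w i (a+b) m (by simpa using h2)]
    · rw [List.getElem_append_right (by simpa using hm)]
      simp only [winW_length]
      rw [winW_getElem w (i+a) b (m-a) (by simp at h2; omega),
        winW_getElem w i (a+b) m (by simpa using h2)]
      congr 1
      omega

lemma winW_reverse (w : ℕ → A) (i n : ℕ) :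
    (winW w i n).reverse = (List.range n).map (fun l => w (i+(n-1-l))) := by
  apply List.ext_getElem
  · simp
  · intro m h1 h2
    rw [List.getElem_reverse]
    simp only [winW_length] at h1 ⊢
    simp only [List.length_reverse, winW_length] at h1
    rw [winW_getElem w i n (n-1-m) (by omega)]
    simp only [List.getElem_map, List.getElem_range]

lemma getD_reverse (u : List A) (l : ℕ) (d : A) (h : l < u.length) :
    u.reverse.getD l d = u.getD (u.length - 1 - l) d := by
  rw [List.getD_eq_getElem _ _ (by simpa using h),
    List.getD_eq_getElem _ _ (by omega), List.getElem_reverse]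

lemma SimRev_cases {a b u : List A} (ha : a = u ∨ a = u.reverse)
    (hb : b = u ∨ b = u.reverse) : SimRev a b := by
  rcases ha with ha | ha <;> rcases hb with hb | hb <;> subst ha <;> subst hb <;>
    simp [SimRev]

/-- abstract block condition -/
def BBlk (w : ℕ → A) (i n k : ℕ) : Prop :=
  (∀ l, l < n → w (i+k*n+l) = w (i+l)) ∨ (∀ l, l < n → w (i+k*n+l) = w (i+(n-1-l)))

instance (w : ℕ → Fin 2) (i n k : ℕ) : Decidable (BBlk w i n k) := by
  unfold BBlk; infer_instance

lemma getD_map_range {B : Type*} (f : ℕ → B) (m a : ℕ) (d : B) (h : a < m) :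
    ((List.range m).map f).getD a d = f a := by
  rw [List.getD_eq_getElem _ _ (by simpa using h)]
  simp

lemma flatten_of_wins (w : ℕ → A) (i n : ℕ) :
    ∀ m, ((List.range m).map (fun k => winW w (i+k*n) n)).flatten = winW w i (m*n) := by
  intro m
  induction m with
  | zero => simp [winW]
  | succ m IH =>
    rw [List.range_succ, List.map_append, List.flatten_append, IH]
    simp only [List.map_cons, List.map_nil, List.flatten_cons, List.flatten_nil,
      List.append_nil]
    rw [winW_append w i (m*n) n]
    congr 1
    ring

lemma encounters_of_B (w : ℕ → A) (m i n : ℕ) (hm : 1 ≤ m) (hn : 1 ≤ n)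
    (hB : ∀ k, 1 ≤ k → k < m → BBlk w i n k) :
    Encounters SimRev (List.replicate m ()) w := by
  refine ⟨(List.range m).map (fun k => winW w (i+k*n) n), by simp, ?_, ?_, ?_⟩
  · intro x hx
    simp only [List.mem_map] at hx
    obtain ⟨k, _, rfl⟩ := hx
    have : (winW w (i+k*n) n).length = n := by simp
    intro hcon
    rw [hcon] at this
    simp at this
    omega
  · refine ⟨i, ?_⟩
    rw [flatten_of_wins w i n m]
    simp only [winW_length]
    rfl
  · have hOf : ∀ a, a < m →
        ((List.range m).map (fun k => winW w (i+k*n) n)).getD a [] = winW w i n ∨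
        ((List.range m).map (fun k => winW w (i+k*n) n)).getD a [] = (winW w i n).reverse := by
      intro a ha
      rw [getD_map_range _ m a [] ha]
      rcases Nat.eq_zero_or_pos a with rfl | hpos
      · left; simp
      · rcases hB a hpos ha with h | h
        · left
          apply List.map_congr_left
          intro l hl
          simp only [List.mem_range] at hl
          rw [show i+a*n+l = i+a*n+l from rfl]
          exact h l hl
        · right
          rw [winW_reverse]
          apply List.map_congr_left
          intro l hl
          simp only [List.mem_range] at hl
          exact h l hl
    intro a b ha hb _
    simp only [List.length_replicate] at ha hb
    exact SimRev_cases (hOf a ha) (hOf b hb)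

lemma flatten_getD (d : A) (n : ℕ) :
    ∀ (X : List (List A)) (k l : ℕ), (∀ x ∈ X, x.length = n) → k < X.length → l < n →
      X.flatten.getD (k*n+l) d = (X.getD k []).getD l d := by
  intro X
  induction X with
  | nil => intro k l _ hk; simp at hk
  | cons x xs IH =>
    intro k l hall hk hl
    have hxlen : x.length = n := hall x (by simp)
    cases k with
    | zero =>
      rw [List.flatten_cons, show 0*n+l = l by ring, List.getD_append _ _ _ _ (by omega),
        List.getD_cons_zero]
    | succ k =>
      have hidx : (k+1)*n + l = x.length + (k*n + l) := by rw [hxlen]; ring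
      rw [List.flatten_cons, hidx, List.getD_append_right _ _ _ _ (by omega)]
      simp only [Nat.add_sub_cancel_left]
      have := IH k l (fun y hy => hall y (by simp [hy])) (by simpa using hk) hl
      simpa using this

lemma flat_len (n : ℕ) : ∀ (X : List (List A)), (∀ x ∈ X, x.length = n) →
    X.flatten.length = X.length * n := by
  intro X
  induction X with
  | nil => simp
  | cons x xs IH =>
    intro hall
    rw [List.flatten_cons, List.length_append, hall x (by simp),
      IH (fun y hy => hall y (by simp [hy]))]
    simp only [List.length_cons]
    ring

lemma blocks_of_encounters (w : ℕ → A) (m : ℕ) (hm : 2 ≤ m)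
    (henc : Encounters SimRev (List.replicate m ()) w) :
    ∃ i n, 1 ≤ n ∧ ∀ k, 1 ≤ k → k < m → BBlk w i n k := by
  obtain ⟨X, hlen, hne, ⟨i, hfac⟩, hsim⟩ := henc
  simp only [List.length_replicate] at hlen
  set u := X.getD 0 [] with hu
  set n := u.length with hn
  have humem : u ∈ X := by
    rw [hu, List.getD_eq_getElem _ _ (by omega)]
    exact List.getElem_mem _
  have hn1 : 1 ≤ n := by
    rcases Nat.eq_zero_or_pos n with h0 | h
    · exact absurd (List.eq_nil_of_length_eq_zero h0) (hne u humem)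
    · exact h
  have hall : ∀ k, k < m → X.getD k [] = u ∨ X.getD k [] = u.reverse := by
    intro k hk
    have := hsim 0 k (by simp; omega) (by simpa using hk) ?_
    · exact this
    · rw [List.getElem?_replicate, List.getElem?_replicate,
        if_pos (by omega : (0:ℕ) < m), if_pos hk]
  have hlenall : ∀ x ∈ X, x.length = n := by
    intro x hx
    obtain ⟨k, hk, hkx⟩ := List.mem_iff_getElem.mp hx
    have hgd : X.getD k [] = x := by
      rw [List.getD_eq_getElem _ _ hk, hkx]
    rcases hall k (by omega) with h | h
    · rw [hgd] at h; rw [h]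
    · rw [hgd] at h; rw [h]; simp [hn]
  have hflen : X.flatten.length = m * n := by
    rw [flat_len n X hlenall, hlen]
  have hgetDw : ∀ j, j < m*n → X.flatten.getD j (w 0) = w (i+j) := by
    intro j hj
    have hj' : j < X.flatten.length := by omega
    conv_lhs => rw [hfac]
    exact getD_map_range _ _ j _ hj'
  have hblockD : ∀ k l, k < m → l < n →
      X.flatten.getD (k*n+l) (w 0) = (X.getD k []).getD l (w 0) := by
    intro k l hk hl
    exact flatten_getD (w 0) n X k l hlenall (by omega) hl
  have huD : ∀ l, l < n → u.getD l (w 0) = w (i+l) := by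
    intro l hl
    have h1 := hblockD 0 l (by omega) hl
    rw [show 0*n+l = l by ring] at h1
    rw [hu, ← h1]
    exact hgetDw l (by nlinarith)
  refine ⟨i, n, hn1, fun k hk1 hkm => ?_⟩
  have hkn : k*n + n ≤ m*n := by
    have hle : k+1 ≤ m := hkm
    calc k*n+n = (k+1)*n := by ring
    _ ≤ m*n := Nat.mul_le_mul_right n hle
  have key : ∀ l, l < n → w (i+k*n+l) = (X.getD k []).getD l (w 0) := by
    intro l hl
    rw [← hblockD k l (by omega) hl, hgetDw (k*n+l) (by omega)]
    congr 1
    ring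
  rcases hall k (by omega) with hkE | hkR
  · left
    intro l hl
    rw [key l hl, hkE, huD l hl]
  · right
    intro l hl
    rw [key l hl, hkR, getD_reverse u l (w 0) (by omega), ← hn,
      huD (n-1-l) (by omega)]

end Bridge
/-- the ternary square-free word avoids x^m up to reversal for m ≥ 2 -/
lemma tern_avoid (m : ℕ) (hm : 2 ≤ m) : ¬ Encounters SimRev (List.replicate m ()) w3 := by
  intro henc
  obtain ⟨i, n, hn, hB⟩ := blocks_of_encounters w3 m hm henc
  rcases hB 1 (by omega) (by omega) with hE | hR
  · refine w3_sqfree n hn i (fun l hl => ?_)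
    have := hE l hl
    rw [show i+1*n+l = i+n+l by ring] at this
    exact this.symm
  · have h0 := hR 0 (by omega)
    rw [show i+1*n+0 = i+n by ring] at h0
    refine w3_sqfree 1 (by omega) (i+n-1) (fun l hl => ?_)
    interval_cases l
    rw [show i+n-1+0 = i+(n-1-0) by omega, show i+n-1+1+0 = i+n by omega]
    exact h0.symm

/-- Fin 2 version of the binary avoider -/
def WbF : ℕ → Fin 2 := fun n => if Wb n then 1 else 0

lemma WbF_inj (a b : ℕ) : WbF a = WbF b ↔ Wb a = Wb b := by
  unfold WbF
  cases Wb a <;> cases Wb b <;> simp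

/-- the binary word WbF avoids x^m up to reversal for m ≥ 4 -/
lemma bin_avoid (m : ℕ) (hm : 4 ≤ m) : ¬ Encounters SimRev (List.replicate m ()) WbF := by
  intro henc
  obtain ⟨i, n, hn, hB⟩ := blocks_of_encounters WbF m (by omega) henc
  have conv : ∀ k, BBlk WbF i n k → WBlk i n k := by
    intro k h
    rcases h with h | h
    · exact Or.inl (fun l hl => (WbF_inj _ _).mp (h l hl))
    · exact Or.inr (fun l hl => (WbF_inj _ _).mp (h l hl))
  exact Wb_avoids n hn i
    ⟨conv 1 (hB 1 (by omega) (by omega)), conv 2 (hB 2 (by omega) (by omega)),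
     conv 3 (hB 3 (by omega) (by omega))⟩

/-- truncation of a Fin-indexed word -/
def truncF {N : ℕ} (v : Fin N → Fin 2) : ℕ → Fin 2 :=
  fun j => if h : j < N then v ⟨j, h⟩ else 0

lemma dec2 : ∀ b0 b1 b2 b3 : Fin 2, ∃ n : Fin 3, ∃ i : Fin 4,
    1 ≤ (n:ℕ) ∧ (i:ℕ) + 2*(n:ℕ) ≤ 4 ∧
    BBlk (fun j => [b0,b1,b2,b3].getD j 0) i n 1 := by decide

set_option maxRecDepth 4000 in
lemma dec3 : ∀ b0 b1 b2 b3 b4 b5 b6 b7 b8 b9 : Fin 2, ∃ n : Fin 4, ∃ i : Fin 10,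
    1 ≤ (n:ℕ) ∧ (i:ℕ) + 3*(n:ℕ) ≤ 10 ∧
    BBlk (fun j => [b0,b1,b2,b3,b4,b5,b6,b7,b8,b9].getD j 0) i n 1 ∧
    BBlk (fun j => [b0,b1,b2,b3,b4,b5,b6,b7,b8,b9].getD j 0) i n 2 := by decide

lemma BBlk_of_list (w : ℕ → Fin 2) (u : List (Fin 2)) (i n k : ℕ)
    (hbound : i + k*n + n ≤ u.length) (hval : ∀ j, j < u.length → u.getD j 0 = w j)
    (h : BBlk (fun j => u.getD j 0) i n k) : BBlk w i n k := by
  rcases h with h | h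
  · refine Or.inl (fun l hl => ?_)
    have := h l hl
    simp only at this
    rw [← hval (i+k*n+l) (by omega), ← hval (i+l) (by omega)]
    exact this
  · refine Or.inr (fun l hl => ?_)
    have := h l hl
    simp only at this
    rw [← hval (i+k*n+l) (by omega), ← hval (i+(n-1-l)) (by omega)]
    exact this

/-- every infinite binary word encounters x² up to reversal -/
lemma bin2_enc (w : ℕ → Fin 2) : Encounters SimRev (List.replicate 2 ()) w := by
  obtain ⟨n, i, hn, hb, hB⟩ := dec2 (w 0) (w 1) (w 2) (w 3)
  have hval : ∀ j, j < ([w 0, w 1, w 2, w 3] : List (Fin 2)).length →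
      ([w 0, w 1, w 2, w 3] : List (Fin 2)).getD j 0 = w j := by
    intro j hj
    simp at hj
    interval_cases j <;> rfl
  refine encounters_of_B w 2 i n (by omega) hn (fun k hk1 hk2 => ?_)
  interval_cases k
  exact BBlk_of_list w _ i n 1 (by simp; omega) hval hB

/-- every infinite binary word encounters x³ up to reversal -/
lemma bin3_enc (w : ℕ → Fin 2) : Encounters SimRev (List.replicate 3 ()) w := by
  obtain ⟨n, i, hn, hb, hB1, hB2⟩ := dec3 (w 0) (w 1) (w 2) (w 3) (w 4) (w 5) (w 6) (w 7) (w 8) (w 9)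
  have hval : ∀ j, j < ([w 0, w 1, w 2, w 3, w 4, w 5, w 6, w 7, w 8, w 9] : List (Fin 2)).length →
      ([w 0, w 1, w 2, w 3, w 4, w 5, w 6, w 7, w 8, w 9] : List (Fin 2)).getD j 0 = w j := by
    intro j hj
    simp at hj
    interval_cases j <;> rfl
  refine encounters_of_B w 3 i n (by omega) hn (fun k hk1 hk2 => ?_)
  interval_cases k
  · exact BBlk_of_list w _ i n 1 (by simp; omega) hval hB1
  · exact BBlk_of_list w _ i n 2 (by simp; omega) hval hB2

/-- every infinite unary word encounters x^m, m ≥ 1 -/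
lemma unary_enc (w : ℕ → Fin 1) (m : ℕ) (hm : 1 ≤ m) :
    Encounters SimRev (List.replicate m ()) w := by
  refine encounters_of_B w m 0 1 hm (by omega) (fun k _ _ => Or.inl (fun l hl => ?_))
  exact Subsingleton.elim _ _

/-- `λ_≃(x²) = 3`, `λ_≃(x³) = 3`, and `λ_≃(x^m) = 2` for every `m ≥ 4`: there is an
infinite ternary word avoiding `xx` (resp. `xxx`) up to `≃` but no infinite binary word
does; for every `m ≥ 4` there is an infinite binary word avoiding `x^m` up to `≃`;
and no infinite unary word avoids any `x^m`. -/
theorem lamRev_unary_patterns :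
    lamRevUnary 2 = 3 ∧ lamRevUnary 3 = 3 ∧ (∀ m : ℕ, 4 ≤ m → lamRevUnary m = 2) ∧
    (∃ w : ℕ → Fin 3, ¬ Encounters SimRev (List.replicate 2 ()) w) ∧
    (¬ ∃ w : ℕ → Fin 2, ¬ Encounters SimRev (List.replicate 2 ()) w) ∧
    (∃ w : ℕ → Fin 3, ¬ Encounters SimRev (List.replicate 3 ()) w) ∧
    (¬ ∃ w : ℕ → Fin 2, ¬ Encounters SimRev (List.replicate 3 ()) w) ∧
    (∀ m : ℕ, 4 ≤ m → ∃ w : ℕ → Fin 2, ¬ Encounters SimRev (List.replicate m ()) w) ∧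
    (∀ m : ℕ, 1 ≤ m → ¬ ∃ w : ℕ → Fin 1, ¬ Encounters SimRev (List.replicate m ()) w) := by
  have mem2 : 3 ∈ {k : ℕ | ∃ w : ℕ → Fin k, ¬ Encounters SimRev (List.replicate 2 ()) w} :=
    ⟨w3, tern_avoid 2 le_rfl⟩
  have mem3 : 3 ∈ {k : ℕ | ∃ w : ℕ → Fin k, ¬ Encounters SimRev (List.replicate 3 ()) w} :=
    ⟨w3, tern_avoid 3 (by omega)⟩
  have lb2 : ∀ k ∈ {k : ℕ | ∃ w : ℕ → Fin k, ¬ Encounters SimRev (List.replicate 2 ()) w},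
      3 ≤ k := by
    rintro k ⟨w, hw⟩
    by_contra h
    push_neg at h
    interval_cases k
    · exact (w 0).elim0
    · exact hw (unary_enc w 2 (by omega))
    · exact hw (bin2_enc w)
  have lb3 : ∀ k ∈ {k : ℕ | ∃ w : ℕ → Fin k, ¬ Encounters SimRev (List.replicate 3 ()) w},
      3 ≤ k := by
    rintro k ⟨w, hw⟩
    by_contra h
    push_neg at h
    interval_cases k
    · exact (w 0).elim0
    · exact hw (unary_enc w 3 (by omega))
    · exact hw (bin3_enc w)
  refine ⟨le_antisymm (Nat.sInf_le mem2) (le_csInf ⟨3, mem2⟩ lb2),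
    le_antisymm (Nat.sInf_le mem3) (le_csInf ⟨3, mem3⟩ lb3),
    fun m hm => ?_, ⟨w3, tern_avoid 2 le_rfl⟩, ?_, ⟨w3, tern_avoid 3 (by omega)⟩, ?_,
    fun m hm => ⟨WbF, bin_avoid m hm⟩, fun m hm => ?_⟩
  · have memm : 2 ∈ {k : ℕ | ∃ w : ℕ → Fin k, ¬ Encounters SimRev (List.replicate m ()) w} :=
      ⟨WbF, bin_avoid m hm⟩
    refine le_antisymm (Nat.sInf_le memm) (le_csInf ⟨2, memm⟩ ?_)
    rintro k ⟨w, hw⟩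
    by_contra h
    push_neg at h
    interval_cases k
    · exact (w 0).elim0
    · exact hw (unary_enc w m (by omega))
  · rintro ⟨w, hw⟩
    exact hw (bin2_enc w)
  · rintro ⟨w, hw⟩
    exact hw (bin3_enc w)
  · rintro ⟨w, hw⟩
    exact hw (unary_enc w m hm)
end
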